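/- arXiv:1411.3889 — 4 statements merged into one kernel-verified Lean document; each statement's English description precedes it below -/
import Mathlib

section
/- Let n be a natural number, σ a permutation of Fin n, and k an index with k+1 < n. Let τ be the transposition swapping k and k+1 and set σ' = τ ∘ σ. For any subset S ⊆ Fin n define P_σ(S) = #{x ∈ S : σ(x) ∉ S}. Then, as integers, P_{σ'}(S) − P_σ(S) = (χ_S(σ⁻¹(k)) − χ_S(σ⁻¹(k+1))) · (χ_S(k) − χ_S(k+1)), where χ_S denotes the {0,1}-valued indicator of S. In particular |P_{σ'}(S) − P_σ(S)| ≤ 1, and P_{σ'}(S) ≠ P_σ(S) exactly when exactly one of σ⁻¹(k), σ⁻¹(k+1) lies in S and exactly one of k, k+1 lies in S. -/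
lemma EPN_key {n : ℕ} (σ : Equiv.Perm (Fin n)) (a b : Fin n) (hab : a ≠ b)
    (S : Finset (Fin n)) :
    (((S.filter (fun x => (Equiv.swap a b * σ) x ∉ S)).card : ℤ)
      - ((S.filter (fun x => σ x ∉ S)).card : ℤ))
    = ((if σ⁻¹ a ∈ S then (1:ℤ) else 0) - (if σ⁻¹ b ∈ S then 1 else 0)) *
      ((if a ∈ S then (1:ℤ) else 0) - (if b ∈ S then 1 else 0)) := by
  have hinv : σ⁻¹ a ≠ σ⁻¹ b := fun h => hab (σ.injective (by simpa using congrArg σ h))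
  have hcard : ∀ (p : Fin n → Prop) [DecidablePred p],
      ((S.filter p).card : ℤ) = ∑ x ∈ S, (if p x then (1:ℤ) else 0) := by
    intro p _
    simp [Finset.sum_boole]
  rw [hcard, hcard, ← Finset.sum_sub_distrib]
  have hpt : ∀ x ∈ S,
      ((if (Equiv.swap a b * σ) x ∉ S then (1:ℤ) else 0) - (if σ x ∉ S then 1 else 0))
      = (if x = σ⁻¹ a then ((if a ∈ S then (1:ℤ) else 0) - (if b ∈ S then 1 else 0)) else 0)
        + (if x = σ⁻¹ b then ((if b ∈ S then (1:ℤ) else 0) - (if a ∈ S then 1 else 0)) else 0) := by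
    intro x hx
    by_cases hxa : σ x = a
    · have h1 : x = σ⁻¹ a := by rw [← hxa]; simp
      have h2 : x ≠ σ⁻¹ b := by rw [h1]; exact hinv
      simp only [Equiv.Perm.mul_apply, hxa, Equiv.swap_apply_left, h1, if_pos rfl, if_neg h2]
      split_ifs <;> simp_all
    · by_cases hxb : σ x = b
      · have h1 : x = σ⁻¹ b := by rw [← hxb]; simp
        have h2 : x ≠ σ⁻¹ a := by rw [h1]; exact hinv.symm
        simp only [Equiv.Perm.mul_apply, hxb, Equiv.swap_apply_right, h1, if_pos rfl, if_neg h2]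
        split_ifs <;> simp_all
      · have h1 : x ≠ σ⁻¹ a := fun h => hxa (by rw [h]; simp)
        have h2 : x ≠ σ⁻¹ b := fun h => hxb (by rw [h]; simp)
        simp only [Equiv.Perm.mul_apply, Equiv.swap_apply_of_ne_of_ne hxa hxb,
          if_neg h1, if_neg h2, sub_self, add_zero]
  rw [Finset.sum_congr rfl hpt, Finset.sum_add_distrib,
    Finset.sum_ite_eq' S (σ⁻¹ a), Finset.sum_ite_eq' S (σ⁻¹ b)]
  split_ifs <;> ring

/-- Effect of removing an adjacent white–black BCFW bridge on the
exterior permutation number (EPN). -/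
theorem EPN_change_under_adjacent_bridge (n : ℕ) (σ : Equiv.Perm (Fin n))
    (k : ℕ) (hk : k + 1 < n) (S : Finset (Fin n)) :
    let a : Fin n := ⟨k, Nat.lt_of_succ_lt hk⟩
    let b : Fin n := ⟨k + 1, hk⟩
    let σ' : Equiv.Perm (Fin n) := (Equiv.swap a b) * σ
    let P : Equiv.Perm (Fin n) → ℤ :=
      fun π => ((S.filter (fun x => π x ∉ S)).card : ℤ)
    let χ : Fin n → ℤ := fun x => if x ∈ S then 1 else 0
    P σ' - P σ = (χ (σ⁻¹ a) - χ (σ⁻¹ b)) * (χ a - χ b) ∧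
    |P σ' - P σ| ≤ 1 ∧
    (P σ' ≠ P σ ↔ (Xor' (σ⁻¹ a ∈ S) (σ⁻¹ b ∈ S) ∧ Xor' (a ∈ S) (b ∈ S))) := by
  intro a b σ' P χ
  have hab : a ≠ b := by
    intro h
    exact absurd (congrArg Fin.val h) (by simp [a, b])
  have key := EPN_key σ a b hab S
  refine ⟨key, ?_, ?_⟩
  · rw [key]
    split_ifs <;> norm_num
  · rw [ne_eq, ← sub_eq_zero, key]
    simp only [Xor']
    split_ifs <;> simp_all
end

section
/- Let K be a field, write ⟨u,v⟩ = u₁v₂ − u₂v₁ for u, v ∈ K². Let a ≤ c be integers, v_a, v_{a+1}, …, v_c ∈ K², and x ∈ K² with ⟨v_j, x⟩ ≠ 0 for all a ≤ j ≤ c. Then Σ_{j=a}^{c−1} ⟨v_j, v_{j+1}⟩ / (⟨v_j, x⟩·⟨x, v_{j+1}⟩) = ⟨v_a, v_c⟩ / (⟨v_a, x⟩·⟨x, v_c⟩). -/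
private lemma eikonal_aux {K : Type*} [Field K] (a : ℤ)
    (v : ℤ → Fin 2 → K) (x : Fin 2 → K) :
    ∀ c : ℤ, a ≤ c →
      (∀ j : ℤ, a ≤ j → j ≤ c → v j 0 * x 1 - v j 1 * x 0 ≠ 0) →
      ∑ j ∈ Finset.Ico a c,
          (v j 0 * v (j+1) 1 - v j 1 * v (j+1) 0) /
            ((v j 0 * x 1 - v j 1 * x 0) * (x 0 * v (j+1) 1 - x 1 * v (j+1) 0))
        = (v a 0 * v c 1 - v a 1 * v c 0) /
            ((v a 0 * x 1 - v a 1 * x 0) * (x 0 * v c 1 - x 1 * v c 0)) := by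
  intro c hle
  refine Int.le_induction (motive := fun c _ =>
      (∀ j : ℤ, a ≤ j → j ≤ c → v j 0 * x 1 - v j 1 * x 0 ≠ 0) →
      ∑ j ∈ Finset.Ico a c,
          (v j 0 * v (j+1) 1 - v j 1 * v (j+1) 0) /
            ((v j 0 * x 1 - v j 1 * x 0) * (x 0 * v (j+1) 1 - x 1 * v (j+1) 0))
        = (v a 0 * v c 1 - v a 1 * v c 0) /
            ((v a 0 * x 1 - v a 1 * x 0) * (x 0 * v c 1 - x 1 * v c 0))) ?_ ?_ c hle
  · intro _
    rw [Finset.Ico_self, Finset.sum_empty, mul_comm (v a 1) (v a 0), sub_self, zero_div]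
  · intro c hc ih hvx
    have hins : Finset.Ico a (c+1) = insert c (Finset.Ico a c) := by
      ext k
      simp only [Finset.mem_Ico, Finset.mem_insert]
      omega
    rw [hins, Finset.sum_insert (by simp), ih (fun j h1 h2 => hvx j h1 (by omega)),
      add_comm]
    have ha : v a 0 * x 1 - v a 1 * x 0 ≠ 0 := hvx a le_rfl (by omega)
    have hcx : v c 0 * x 1 - v c 1 * x 0 ≠ 0 := hvx c hc (by omega)
    have hc1 : v (c+1) 0 * x 1 - v (c+1) 1 * x 0 ≠ 0 := hvx (c+1) (by omega) le_rfl
    have hxc : x 0 * v c 1 - x 1 * v c 0 ≠ 0 := fun h => hcx (by linear_combination -h)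
    have hxc1 : x 0 * v (c+1) 1 - x 1 * v (c+1) 0 ≠ 0 :=
      fun h => hc1 (by linear_combination -h)
    have hxc' : v c 1 * x 0 - v c 0 * x 1 ≠ 0 := fun h => hxc (by linear_combination h)
    field_simp
    ring

/-- Telescoping eikonal identity: the sum of the one-step split terms from
`a` to `c` collapses to a single term. -/
theorem eikonal_telescope {K : Type*} [Field K] (a c : ℤ) (hac : a ≤ c)
    (v : ℤ → Fin 2 → K) (x : Fin 2 → K)
    (hvx : ∀ j : ℤ, a ≤ j → j ≤ c →
      v j 0 * x 1 - v j 1 * x 0 ≠ 0) :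
    let br : (Fin 2 → K) → (Fin 2 → K) → K :=
      fun p q => p 0 * q 1 - p 1 * q 0
    ∑ j ∈ Finset.Ico a c,
        br (v j) (v (j + 1)) / (br (v j) x * br x (v (j + 1)))
      = br (v a) (v c) / (br (v a) x * br x (v c)) := by
  intro br
  exact eikonal_aux a v x c hac hvx
end

section
/- Let K be a field, write ⟨u,v⟩ = u₁v₂ − u₂v₁ for u, v ∈ K². Let m ≥ 1, let v₁, …, v_m ∈ K² with indices taken cyclically (v_{m+1} = v₁), and let x ∈ K² satisfy ⟨v_j, x⟩ ≠ 0 for all 1 ≤ j ≤ m. Then Σ_{j=1}^{m} ⟨v_j, v_{j+1}⟩ / (⟨v_j, x⟩·⟨x, v_{j+1}⟩) = 0. Equivalently, if moreover ⟨v_i, v_{i+1}⟩ ≠ 0 for all i and D = Π_{i=1}^{m} ⟨v_i, v_{i+1}⟩, then the sum over all m cyclic insertion positions of x of the reciprocals of the planar Parke–Taylor denominators PT_j = D·⟨v_j, x⟩·⟨x, v_{j+1}⟩/⟨v_j, v_{j+1}⟩ vanishes. -/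
/-- U(1) decoupling (MHV Parke–Taylor form): the cyclic sum of eikonal
terms vanishes; equivalently, the sum over all cyclic insertion positions of
`x` of the reciprocals of the planar Parke–Taylor denominators vanishes. -/
theorem u1_decoupling {K : Type*} [Field K] (m : ℕ) (hm : 1 ≤ m)
    (v : ℕ → Fin 2 → K) (x : Fin 2 → K)
    (hcyc : v (m + 1) = v 1)
    (hvx : ∀ j ∈ Finset.Icc 1 m, v j 0 * x 1 - v j 1 * x 0 ≠ 0) :
    let br : (Fin 2 → K) → (Fin 2 → K) → K :=
      fun p q => p 0 * q 1 - p 1 * q 0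
    (∑ j ∈ Finset.Icc 1 m,
        br (v j) (v (j + 1)) / (br (v j) x * br x (v (j + 1)))) = 0 ∧
    (∀ _hnz : ∀ i ∈ Finset.Icc 1 m, br (v i) (v (i + 1)) ≠ 0,
      ∑ j ∈ Finset.Icc 1 m,
        ((∏ i ∈ Finset.Icc 1 m, br (v i) (v (i + 1))) *
            br (v j) x * br x (v (j + 1)) / br (v j) (v (j + 1)))⁻¹ = 0) := by
  intro br
  have hbr : ∀ p q : Fin 2 → K, br p q = p 0 * q 1 - p 1 * q 0 := fun _ _ => rfl
  -- choose a reference vector d with br x d ≠ 0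
  have hx1 : br (v 1) x ≠ 0 := hvx 1 (Finset.mem_Icc.mpr ⟨le_refl 1, hm⟩)
  obtain ⟨d, hd⟩ : ∃ d : Fin 2 → K, br x d ≠ 0 := by
    by_cases h0 : x 0 ≠ 0
    · exact ⟨![0, 1], by simpa [hbr] using h0⟩
    · push_neg at h0
      refine ⟨![1, 0], ?_⟩
      have h1 : x 1 ≠ 0 := by
        intro h1
        apply hx1
        simp [hbr, h0, h1]
      simpa [hbr, h0] using h1
  set g : ℕ → K := fun j => br (v j) d / (br (v j) x * br x d) with hg
  -- next vertex also pairs nontrivially with x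
  have hnext : ∀ j ∈ Finset.Icc 1 m, br (v (j + 1)) x ≠ 0 := by
    intro j hj
    rw [Finset.mem_Icc] at hj
    rcases lt_or_eq_of_le hj.2 with h | h
    · exact hvx (j + 1) (Finset.mem_Icc.mpr ⟨le_trans hj.1 (Nat.le_succ j), h⟩)
    · rw [h, hcyc]; exact hx1
  -- Schouten / partial fractions identity
  have key : ∀ j ∈ Finset.Icc 1 m,
      br (v j) (v (j + 1)) / (br (v j) x * br x (v (j + 1))) = g j - g (j + 1) := by
    intro j hj
    have ha : br (v j) x ≠ 0 := hvx j hj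
    have hb : br (v (j + 1)) x ≠ 0 := hnext j hj
    have hb' : br x (v (j + 1)) ≠ 0 := by
      have : br x (v (j + 1)) = -(br (v (j + 1)) x) := by simp [hbr]; ring
      rw [this]
      exact neg_ne_zero.mpr hb
    simp only [hg, hbr] at *
    have hb'' : v (j + 1) 1 * x 0 - v (j + 1) 0 * x 1 ≠ 0 := by
      intro h; apply hb; linear_combination -h
    field_simp
    ring
  have main : (∑ j ∈ Finset.Icc 1 m,
      br (v j) (v (j + 1)) / (br (v j) x * br x (v (j + 1)))) = 0 := by
    rw [Finset.sum_congr rfl key]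
    rw [← Finset.Ico_add_one_right_eq_Icc, Finset.sum_Ico_eq_sum_range]
    have hms : m + 1 - 1 = m := by omega
    rw [hms]
    have ht : ∑ k ∈ Finset.range m, (g (1 + k) - g (1 + k + 1)) = g (1 + 0) - g (1 + m) :=
      Finset.sum_range_sub' (fun i => g (1 + i)) m
    rw [ht]
    have hgm : g (1 + m) = g (1 + 0) := by
      simp only [hg]
      have h' : (1 + m) = m + 1 := by omega
      rw [h', hcyc]
    rw [hgm, sub_self]
  refine ⟨main, fun _hnz => ?_⟩
  have : ∀ j ∈ Finset.Icc 1 m,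
      ((∏ i ∈ Finset.Icc 1 m, br (v i) (v (i + 1))) *
          br (v j) x * br x (v (j + 1)) / br (v j) (v (j + 1)))⁻¹ =
      (∏ i ∈ Finset.Icc 1 m, br (v i) (v (i + 1)))⁻¹ *
        (br (v j) (v (j + 1)) / (br (v j) x * br x (v (j + 1)))) := by
    intro j _
    simp only [div_eq_mul_inv, mul_inv, inv_inv]
    ring
  rw [Finset.sum_congr rfl this, ← Finset.mul_sum, main, mul_zero]
end

section
/- Let K be a field, write ⟨u,v⟩ = u₁v₂ − u₂v₁ for u, v ∈ K². Let m ≥ 2, v₁, …, v_m ∈ K² with ⟨v_i, v_{i+1}⟩ ≠ 0 for all i (indices cyclic, v_{m+1} = v₁), let 1 ≤ a < c ≤ m, and let x ∈ K² with ⟨v_j, x⟩ ≠ 0 for all a ≤ j ≤ c. Set D = Π_{i=1}^{m} ⟨v_i, v_{i+1}⟩ and, for a ≤ j ≤ c−1, let PT_j = D·⟨v_j, x⟩·⟨x, v_{j+1}⟩/⟨v_j, v_{j+1}⟩ be the planar Parke–Taylor denominator of the cycle (v₁, …, v_j, x, v_{j+1}, …, v_m). Then the nonplanar MHV integrand satisfies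 ⟨v_a, v_c⟩ / (⟨v_a, x⟩·⟨x, v_c⟩·D) = Σ_{j=a}^{c−1} 1/PT_j, i.e., it is the sum of the reciprocals of the planar Parke–Taylor denominators with x inserted in each position between a and c. -/
private lemma pt_core {K : Type*} [Field K] (v : ℕ → Fin 2 → K) (x : Fin 2 → K)
    (a c : ℕ) (hac : a < c)
    (hvx : ∀ j : ℕ, a ≤ j → j ≤ c → v j 0 * x 1 - v j 1 * x 0 ≠ 0) :
    (v a 0 * v c 1 - v a 1 * v c 0) /
        ((v a 0 * x 1 - v a 1 * x 0) * (x 0 * v c 1 - x 1 * v c 0))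
      = ∑ j ∈ Finset.Ico a c,
          (v j 0 * v (j+1) 1 - v j 1 * v (j+1) 0) /
            ((v j 0 * x 1 - v j 1 * x 0) * (x 0 * v (j+1) 1 - x 1 * v (j+1) 0)) := by
  induction c, hac using Nat.le_induction with
  | base =>
    rw [Finset.sum_Ico_eq_sum_range]
    simp
  | succ c hc ih =>
    rw [Finset.sum_Ico_succ_top (by omega), ← ih (fun j h1 h2 => hvx j h1 (by omega))]
    have hP : v a 0 * x 1 - v a 1 * x 0 ≠ 0 := hvx a le_rfl (by omega)
    have hQ : v c 0 * x 1 - v c 1 * x 0 ≠ 0 := hvx c (by omega) (by omega)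
    have hR : v (c+1) 0 * x 1 - v (c+1) 1 * x 0 ≠ 0 := hvx (c+1) (by omega) le_rfl
    have hQ' : x 0 * v c 1 - x 1 * v c 0 ≠ 0 := fun h => hQ (by linear_combination -h)
    have hR' : x 0 * v (c+1) 1 - x 1 * v (c+1) 0 ≠ 0 := fun h => hR (by linear_combination -h)
    rw [div_add_div _ _ (mul_ne_zero hP hQ') (mul_ne_zero hQ hR'),
      div_eq_div_iff (mul_ne_zero hP hR') (mul_ne_zero (mul_ne_zero hP hQ') (mul_ne_zero hQ hR'))]
    ring

/-- Nonplanar MHV top-form integrand as a sum of planar Parke–Taylor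
integrands: inserting `x` nonadjacently between positions `a` and `c` of a
cycle gives the sum of the reciprocals of the planar Parke–Taylor
denominators with `x` inserted at each intermediate position. -/
theorem nonplanar_MHV_to_planar_sum {K : Type*} [Field K] (m : ℕ) (hm : 2 ≤ m)
    (v : ℕ → Fin 2 → K) (x : Fin 2 → K)
    (hcyc : v (m + 1) = v 1)
    (hden : ∀ i ∈ Finset.Icc 1 m,
      v i 0 * v (i + 1) 1 - v i 1 * v (i + 1) 0 ≠ 0)
    (a c : ℕ) (ha : 1 ≤ a) (hac : a < c) (hc : c ≤ m)
    (hvx : ∀ j : ℕ, a ≤ j → j ≤ c → v j 0 * x 1 - v j 1 * x 0 ≠ 0) :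
    let br : (Fin 2 → K) → (Fin 2 → K) → K :=
      fun p q => p 0 * q 1 - p 1 * q 0
    let D : K := ∏ i ∈ Finset.Icc 1 m, br (v i) (v (i + 1))
    let PT : ℕ → K :=
      fun j => D * br (v j) x * br x (v (j + 1)) / br (v j) (v (j + 1))
    br (v a) (v c) / (br (v a) x * br x (v c) * D)
      = ∑ j ∈ Finset.Ico a c, (PT j)⁻¹ := by
  intro br D PT
  have hD : D ≠ 0 := Finset.prod_ne_zero_iff.mpr hden
  have key := pt_core v x a c hac hvx
  have hPT : ∀ j ∈ Finset.Ico a c, (PT j)⁻¹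
      = D⁻¹ * (br (v j) (v (j+1)) /
          ((v j 0 * x 1 - v j 1 * x 0) * (x 0 * v (j+1) 1 - x 1 * v (j+1) 0))) := by
    intro j hj
    simp only [Finset.mem_Ico] at hj
    have hjj : br (v j) (v (j+1)) ≠ 0 := hden j (Finset.mem_Icc.mpr ⟨by omega, by omega⟩)
    have hP : v j 0 * x 1 - v j 1 * x 0 ≠ 0 := hvx j hj.1 (by omega)
    have hR : v (j+1) 0 * x 1 - v (j+1) 1 * x 0 ≠ 0 := hvx (j+1) (by omega) (by omega)
    have hR' : x 0 * v (j+1) 1 - x 1 * v (j+1) 0 ≠ 0 := fun h => hR (by linear_combination -h)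
    show (D * (v j 0 * x 1 - v j 1 * x 0) * (x 0 * v (j+1) 1 - x 1 * v (j+1) 0) /
        br (v j) (v (j+1)))⁻¹ = _
    field_simp
  rw [Finset.sum_congr rfl hPT, ← Finset.mul_sum, ← key]
  have hP : v a 0 * x 1 - v a 1 * x 0 ≠ 0 := hvx a le_rfl (by omega)
  have hQ : v c 0 * x 1 - v c 1 * x 0 ≠ 0 := hvx c (by omega) le_rfl
  have hQ' : x 0 * v c 1 - x 1 * v c 0 ≠ 0 := fun h => hQ (by linear_combination -h)
  show (v a 0 * v c 1 - v a 1 * v c 0) / ((v a 0 * x 1 - v a 1 * x 0) * (x 0 * v c 1 - x 1 * v c 0) * D) = _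
  field_simp
end
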